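/- Let d ≥ 1, ρ ∈ (0,1), W > 0, and t ≥ 1. Let F̃, G ∈ ℝ^{d×d}. For 0 ≤ k ≤ t−1 and 1 ≤ s ≤ k+1, let Z_k^{[s]} ∈ ℝ^{d×d} be arbitrary matrices and w_{k−s} ∈ ℝ^d vectors with ‖w_j‖₂ ≤ W for all j. Define weights ξ_0 = ξ_1 = ξ_2 = 1 and ξ_j = ρ^{−(j−2)/2} for j ≥ 3. Then there is an absolute constant C > 0 such that ‖ Σ_{k=0}^{t−1} Σ_{s=1}^{k+1} F̃^{t−k−1} G Z_k^{[s]} w_{k−s} ‖₂ ≤ C · W (1−ρ)^{−1} · ( Σ_{k=0}^{t−1} ξ_{t−k}² Σ_{s=1}^{k+1} ρ^{−s} ‖F̃^{t−k−1} G Z_k^{[s]}‖_F² )^{1/2}. -/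

import Mathlib

/-- A square matrix acting on Euclidean space. -/
noncomputable def mv14 {d : ℕ} (M : Matrix (Fin d) (Fin d) ℝ) (v : EuclideanSpace ℝ (Fin d)) :
    EuclideanSpace ℝ (Fin d) :=
  Matrix.toEuclideanCLM (𝕜 := ℝ) M v

/-- Frobenius norm of a real square matrix. -/
noncomputable def frob14 {d : ℕ} (M : Matrix (Fin d) (Fin d) ℝ) : ℝ :=
  Real.sqrt (∑ i, ∑ j, (M i j) ^ 2)

/-- The weights `ξ_0 = ξ_1 = ξ_2 = 1` and `ξ_j = ρ^{−(j−2)/2}` for `j ≥ 3`. -/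
noncomputable def xiw14 (ρ : ℝ) (j : ℕ) : ℝ := (Real.sqrt ρ ^ (j - 2))⁻¹

lemma frob14_nonneg {d : ℕ} (M : Matrix (Fin d) (Fin d) ℝ) : 0 ≤ frob14 M :=
  Real.sqrt_nonneg _

lemma mv14_norm_le {d : ℕ} (M : Matrix (Fin d) (Fin d) ℝ) (v : EuclideanSpace ℝ (Fin d)) :
    ‖mv14 M v‖ ≤ frob14 M * ‖v‖ := by
  have happ : ∀ i, (mv14 M v) i = ∑ j, M i j * v j := fun i => rfl
  have hv2 : ‖v‖ ^ 2 = ∑ j, (v j) ^ 2 := by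
    rw [EuclideanSpace.norm_eq, Real.sq_sqrt (by positivity)]
    simp [Real.norm_eq_abs, sq_abs]
  have hsq : ‖mv14 M v‖ ^ 2 ≤ (frob14 M * ‖v‖) ^ 2 := by
    rw [EuclideanSpace.norm_eq, Real.sq_sqrt (by positivity), mul_pow, frob14,
      Real.sq_sqrt (by positivity)]
    calc ∑ i, ‖(mv14 M v) i‖ ^ 2
        ≤ ∑ i : Fin d, (∑ j, (M i j) ^ 2) * ‖v‖ ^ 2 := by
          refine Finset.sum_le_sum fun i _ => ?_
          rw [happ, Real.norm_eq_abs, sq_abs, hv2]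
          exact Finset.sum_mul_sq_le_sq_mul_sq _ _ _
      _ = (∑ i, ∑ j, (M i j) ^ 2) * ‖v‖ ^ 2 := by rw [Finset.sum_mul]
  have h2 : (0:ℝ) ≤ frob14 M * ‖v‖ := mul_nonneg (frob14_nonneg M) (norm_nonneg v)
  exact (pow_le_pow_iff_left₀ (norm_nonneg _) h2 two_ne_zero).mp hsq

lemma geom14 {ρ : ℝ} (h0 : 0 < ρ) (h1 : ρ < 1) (n : ℕ) :
    ∑ i ∈ Finset.range n, ρ ^ i ≤ (1 - ρ)⁻¹ := by
  rw [geom_sum_eq (ne_of_lt h1), div_le_iff_of_neg (by linarith : ρ - 1 < 0)]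
  have hne : (1:ℝ) - ρ ≠ 0 := by linarith
  have he : (1 - ρ)⁻¹ * (ρ - 1) = -1 := by
    field_simp
    ring
  rw [he]
  linarith [pow_pos h0 n]

/-- key Cauchy–Schwarz step for the Lipschitz constant in online linear
control.  Here `w j` encodes the disturbance `w_{j−1}`, so `w_{k−s} = w (k+1−s)`.  There is an
absolute constant `C > 0` such that for arbitrary matrices `Z_k^{[s]}` and disturbances of norm
at most `W`,
`‖∑_{k<t} ∑_{s=1}^{k+1} F̃^{t−k−1} G Z_k^{[s]} w_{k−s}‖₂
  ≤ C W (1−ρ)^{−1} (∑_{k<t} ξ_{t−k}² ∑_{s=1}^{k+1} ρ^{−s} ‖F̃^{t−k−1} G Z_k^{[s]}‖_F²)^{1/2}`. -/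
theorem stmt_14 : ∃ C > (0:ℝ),
    ∀ (d t : ℕ) (ρ W : ℝ), 1 ≤ d → 1 ≤ t → ρ ∈ Set.Ioo (0:ℝ) 1 → 0 < W →
    ∀ (Ftil G : Matrix (Fin d) (Fin d) ℝ)
      (Z : ℕ → ℕ → Matrix (Fin d) (Fin d) ℝ)
      (w : ℕ → EuclideanSpace ℝ (Fin d)), (∀ j, ‖w j‖ ≤ W) →
      ‖∑ k ∈ Finset.range t, ∑ s ∈ Finset.Icc 1 (k + 1),
          mv14 (Ftil ^ (t - k - 1) * (G * Z k s)) (w (k + 1 - s))‖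
        ≤ C * W * (1 - ρ)⁻¹ *
            Real.sqrt (∑ k ∈ Finset.range t, xiw14 ρ (t - k) ^ 2 *
              ∑ s ∈ Finset.Icc 1 (k + 1),
                (ρ ^ s)⁻¹ * frob14 (Ftil ^ (t - k - 1) * (G * Z k s)) ^ 2) := by
  refine ⟨1, one_pos, ?_⟩
  intro d t ρ W hd ht hρ hW Ftil G Z w hw
  obtain ⟨hρ0, hρ1⟩ := hρ
  have h1ρ : 0 < 1 - ρ := by linarith
  set A : ℕ → ℕ → Matrix (Fin d) (Fin d) ℝ := fun k s => Ftil ^ (t - k - 1) * (G * Z k s)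
    with hA
  set S := (Finset.range t).sigma (fun k => Finset.Icc 1 (k + 1)) with hS
  set b : (Σ _ : ℕ, ℕ) → ℝ := fun p => ρ ^ (t - p.1 - 2) * ρ ^ p.2 with hb
  have hbpos : ∀ p, 0 < b p := fun p => mul_pos (pow_pos hρ0 _) (pow_pos hρ0 _)
  -- Step 1: triangle inequality and operator-norm bound
  have step1 : ‖∑ k ∈ Finset.range t, ∑ s ∈ Finset.Icc 1 (k + 1),
      mv14 (A k s) (w (k + 1 - s))‖ ≤ W * ∑ p ∈ S, frob14 (A p.1 p.2) := by
    calc ‖∑ k ∈ Finset.range t, ∑ s ∈ Finset.Icc 1 (k + 1), mv14 (A k s) (w (k + 1 - s))‖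
        = ‖∑ p ∈ S, mv14 (A p.1 p.2) (w (p.1 + 1 - p.2))‖ := by rw [Finset.sum_sigma]
      _ ≤ ∑ p ∈ S, ‖mv14 (A p.1 p.2) (w (p.1 + 1 - p.2))‖ := norm_sum_le _ _
      _ ≤ ∑ p ∈ S, W * frob14 (A p.1 p.2) := by
          refine Finset.sum_le_sum fun p _ => ?_
          calc ‖mv14 (A p.1 p.2) (w (p.1 + 1 - p.2))‖
              ≤ frob14 (A p.1 p.2) * ‖w (p.1 + 1 - p.2)‖ := mv14_norm_le _ _
            _ ≤ frob14 (A p.1 p.2) * W :=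
                mul_le_mul_of_nonneg_left (hw _) (frob14_nonneg _)
            _ = W * frob14 (A p.1 p.2) := mul_comm _ _
      _ = W * ∑ p ∈ S, frob14 (A p.1 p.2) := (Finset.mul_sum _ _ _).symm
  -- Step 2: Cauchy–Schwarz
  have step2 : ∑ p ∈ S, frob14 (A p.1 p.2)
      ≤ Real.sqrt (∑ p ∈ S, b p) *
        Real.sqrt (∑ p ∈ S, (b p)⁻¹ * frob14 (A p.1 p.2) ^ 2) := by
    have := Real.sum_sqrt_mul_sqrt_le (f := fun p => b p)
      (g := fun p => (b p)⁻¹ * frob14 (A p.1 p.2) ^ 2) S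
      (fun p => (hbpos p).le)
      (fun p => mul_nonneg (inv_nonneg.mpr (hbpos p).le) (sq_nonneg _))
    refine le_trans (le_of_eq ?_) this
    refine Finset.sum_congr rfl fun p _ => ?_
    rw [← Real.sqrt_mul (hbpos p).le, ← mul_assoc, mul_inv_cancel₀ (hbpos p).ne', one_mul,
      Real.sqrt_sq (frob14_nonneg _)]
  -- Bound on ∑ b
  have hgeom : ∑ p ∈ S, b p ≤ ((1 - ρ)⁻¹) ^ 2 := by
    rw [Finset.sum_sigma]
    have inner_le : ∀ k, ∑ s ∈ Finset.Icc 1 (k + 1), ρ ^ s ≤ ρ * (1 - ρ)⁻¹ := by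
      intro k
      have hins : Finset.range (k + 2) = insert 0 (Finset.Icc 1 (k + 1)) := by
        ext x; simp [Finset.mem_range, Finset.mem_Icc]; omega
      have h := geom14 hρ0 hρ1 (k + 2)
      rw [hins, Finset.sum_insert (by simp)] at h
      simp only [pow_zero] at h
      have : ρ * (1 - ρ)⁻¹ = (1 - ρ)⁻¹ - 1 := by field_simp; ring
      rw [this]
      linarith
    calc ∑ k ∈ Finset.range t, ∑ s ∈ Finset.Icc 1 (k + 1), b ⟨k, s⟩
        = ∑ k ∈ Finset.range t, ρ ^ (t - k - 2) * ∑ s ∈ Finset.Icc 1 (k + 1), ρ ^ s := by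
          refine Finset.sum_congr rfl fun k _ => ?_
          rw [Finset.mul_sum]
      _ ≤ ∑ k ∈ Finset.range t, (ρ⁻¹ * ρ ^ (t - 1 - k)) * (ρ * (1 - ρ)⁻¹) := by
          refine Finset.sum_le_sum fun k _ => ?_
          refine mul_le_mul ?_ (inner_le k) (Finset.sum_nonneg fun s _ => (pow_pos hρ0 s).le)
            (mul_nonneg (inv_nonneg.mpr hρ0.le) (pow_pos hρ0 _).le)
          have hexp : t - 1 - k ≤ (t - k - 2) + 1 := by omega
          have : ρ ^ ((t - k - 2) + 1) ≤ ρ ^ (t - 1 - k) :=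
            pow_le_pow_of_le_one hρ0.le hρ1.le hexp
          rw [pow_succ] at this
          rw [inv_mul_eq_div, le_div_iff₀ hρ0]
          exact this
      _ = ρ⁻¹ * (ρ * (1 - ρ)⁻¹) * ∑ k ∈ Finset.range t, ρ ^ (t - 1 - k) := by
          rw [Finset.mul_sum]; refine Finset.sum_congr rfl fun k _ => ?_; ring
      _ ≤ ρ⁻¹ * (ρ * (1 - ρ)⁻¹) * (1 - ρ)⁻¹ := by
          refine mul_le_mul_of_nonneg_left ?_ (by positivity)
          rw [Finset.sum_range_reflect (fun j => ρ ^ j) t]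
          exact geom14 hρ0 hρ1 t
      _ = ((1 - ρ)⁻¹) ^ 2 := by
          rw [← mul_assoc, inv_mul_cancel₀ hρ0.ne']; ring
  have hsqrtb : Real.sqrt (∑ p ∈ S, b p) ≤ (1 - ρ)⁻¹ := by
    calc Real.sqrt (∑ p ∈ S, b p) ≤ Real.sqrt (((1 - ρ)⁻¹) ^ 2) := Real.sqrt_le_sqrt hgeom
      _ = (1 - ρ)⁻¹ := Real.sqrt_sq (by positivity)
  -- Identify the weighted sum
  have hid : ∑ p ∈ S, (b p)⁻¹ * frob14 (A p.1 p.2) ^ 2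
      = ∑ k ∈ Finset.range t, xiw14 ρ (t - k) ^ 2 *
          ∑ s ∈ Finset.Icc 1 (k + 1), (ρ ^ s)⁻¹ * frob14 (A k s) ^ 2 := by
    rw [Finset.sum_sigma]
    refine Finset.sum_congr rfl fun k _ => ?_
    have hxi : xiw14 ρ (t - k) ^ 2 = (ρ ^ (t - k - 2))⁻¹ := by
      rw [xiw14, inv_pow, ← pow_mul, mul_comm (t - k - 2), pow_mul, Real.sq_sqrt hρ0.le]
    rw [hxi, Finset.mul_sum]
    refine Finset.sum_congr rfl fun s _ => ?_
    rw [hb]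
    simp only [mul_inv]
    ring
  -- combine
  calc ‖∑ k ∈ Finset.range t, ∑ s ∈ Finset.Icc 1 (k + 1),
        mv14 (A k s) (w (k + 1 - s))‖
      ≤ W * ∑ p ∈ S, frob14 (A p.1 p.2) := step1
    _ ≤ W * (Real.sqrt (∑ p ∈ S, b p) *
        Real.sqrt (∑ p ∈ S, (b p)⁻¹ * frob14 (A p.1 p.2) ^ 2)) :=
        mul_le_mul_of_nonneg_left step2 hW.le
    _ ≤ W * ((1 - ρ)⁻¹ * Real.sqrt (∑ p ∈ S, (b p)⁻¹ * frob14 (A p.1 p.2) ^ 2)) := by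
        refine mul_le_mul_of_nonneg_left ?_ hW.le
        exact mul_le_mul_of_nonneg_right hsqrtb (Real.sqrt_nonneg _)
    _ = 1 * W * (1 - ρ)⁻¹ * Real.sqrt (∑ k ∈ Finset.range t, xiw14 ρ (t - k) ^ 2 *
          ∑ s ∈ Finset.Icc 1 (k + 1), (ρ ^ s)⁻¹ * frob14 (A k s) ^ 2) := by
        rw [hid]; ring
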